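/- Every irreducible monomial ideal of R is a Tjurina ideal: if 1 ≤ i₁ < … < i_s ≤ n and e₁,…,e_s ≥ 1, then (x_{i₁}^{e₁}, …, x_{i_s}^{e_s}) = T(x_{i₁}^{e₁+1} + … + x_{i_s}^{e_s+1}). -/

import Mathlib

/-- The partial derivative `∂f/∂xⱼ` of a formal power series `f ∈ ℂ[[x₁,…,xₙ]]`,
defined coefficientwise. -/
noncomputable def pd {n : ℕ} (j : Fin n) (f : MvPowerSeries (Fin n) ℂ) :
    MvPowerSeries (Fin n) ℂ :=
  fun d => ((d j + 1 : ℕ) : ℂ) * MvPowerSeries.coeff (d + Finsupp.single j 1) f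

/-- The Tjurina ideal `T(f) = (f, ∂f/∂x₁, …, ∂f/∂xₙ)`. -/
noncomputable def Tj {n : ℕ} (f : MvPowerSeries (Fin n) ℂ) : Ideal (MvPowerSeries (Fin n) ℂ) :=
  Ideal.span ({f} ∪ Set.range fun j => pd j f)

/-- The set of antiderivatives `Δ(I) = {f : T(f) ⊆ I}`. -/
def Del {n : ℕ} (I : Ideal (MvPowerSeries (Fin n) ℂ)) : Set (MvPowerSeries (Fin n) ℂ) :=
  {f | Tj f ≤ I}

/-- The Tjurina ideal of an arbitrary set of power series (for an ideal `J`, applied to its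
carrier this computes `T(J) = T(g₁) + … + T(g_q)` for any system of generators). -/
noncomputable def Tset {n : ℕ} (A : Set (MvPowerSeries (Fin n) ℂ)) :
    Ideal (MvPowerSeries (Fin n) ℂ) :=
  Ideal.span (A ∪ {g | ∃ f ∈ A, ∃ j, g = pd j f})

/-- The maximal ideal `𝔪 = (x₁,…,xₙ)` of `ℂ[[x₁,…,xₙ]]`. -/
noncomputable def mm (n : ℕ) : Ideal (MvPowerSeries (Fin n) ℂ) :=
  Ideal.span (Set.range (MvPowerSeries.X : Fin n → MvPowerSeries (Fin n) ℂ))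

lemma coeff_pd {n : ℕ} (j : Fin n) (f : MvPowerSeries (Fin n) ℂ) (d : Fin n →₀ ℕ) :
    MvPowerSeries.coeff d (pd j f)
      = ((d j + 1 : ℕ) : ℂ) * MvPowerSeries.coeff (d + Finsupp.single j 1) f :=
  rfl

lemma pd_sum {n : ℕ} (k : Fin n) {α : Type*} (t : Finset α) (f : α → MvPowerSeries (Fin n) ℂ) :
    pd k (∑ a ∈ t, f a) = ∑ a ∈ t, pd k (f a) := by
  apply MvPowerSeries.ext
  intro d
  rw [coeff_pd, map_sum, map_sum, Finset.mul_sum]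
  simp [coeff_pd]

lemma pd_X_pow {n : ℕ} (k i : Fin n) (m : ℕ) (hm : 1 ≤ m) :
    pd k ((MvPowerSeries.X i : MvPowerSeries (Fin n) ℂ) ^ m)
      = if k = i then (m : ℂ) • (MvPowerSeries.X i : MvPowerSeries (Fin n) ℂ) ^ (m - 1) else 0 := by
  apply MvPowerSeries.ext
  intro d
  rw [coeff_pd, MvPowerSeries.coeff_X_pow]
  by_cases hk : k = i
  · subst hk
    rw [if_pos rfl]
    simp only [map_smul, MvPowerSeries.coeff_X_pow, smul_eq_mul]
    by_cases hd : d = Finsupp.single k (m - 1)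
    · subst hd
      have h1 : Finsupp.single k (m - 1) + Finsupp.single k 1 = Finsupp.single k m := by
        rw [← Finsupp.single_add]
        congr 1
        omega
      rw [if_pos h1, if_pos rfl]
      simp [Nat.sub_add_cancel hm]
    · have h1 : Finsupp.single k (m - 1) + Finsupp.single k 1 ≠ d + Finsupp.single k 1 := by
        intro h; exact hd (add_right_cancel h).symm
      have h2 : d + Finsupp.single k 1 ≠ Finsupp.single k m := by
        intro h
        apply h1
        rw [h, ← Finsupp.single_add]
        congr 1
        omega
      rw [if_neg h2, if_neg hd]
      ring
  · rw [if_neg hk]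
    have h2 : d + Finsupp.single k 1 ≠ Finsupp.single i m := by
      intro h
      have := DFunLike.congr_fun h k
      simp [Finsupp.single_apply, Ne.symm hk] at this
    rw [if_neg h2]
    simp

/-- every irreducible monomial ideal is a Tjurina ideal:
`(x_{i₁}^{e₁}, …, x_{i_s}^{e_s}) = T(x_{i₁}^{e₁+1} + … + x_{i_s}^{e_s+1})`. -/
theorem stmt_19 {n s : ℕ} (ι : Fin s → Fin n) (hι : StrictMono ι)
    (e : Fin s → ℕ) (he : ∀ j, 1 ≤ e j) :
    Ideal.span (Set.range fun j => (MvPowerSeries.X (ι j) : MvPowerSeries (Fin n) ℂ) ^ e j)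
      = Tj (∑ j, (MvPowerSeries.X (ι j) : MvPowerSeries (Fin n) ℂ) ^ (e j + 1)) := by
  set f : MvPowerSeries (Fin n) ℂ := ∑ j, (MvPowerSeries.X (ι j)) ^ (e j + 1) with hf
  have hpd : ∀ k : Fin n, pd k f =
      ∑ j, if k = ι j then ((e j + 1 : ℕ) : ℂ) • (MvPowerSeries.X (ι j) : MvPowerSeries (Fin n) ℂ) ^ (e j) else 0 := by
    intro k
    rw [hf, pd_sum]
    refine Finset.sum_congr rfl fun j _ => ?_
    rw [pd_X_pow k (ι j) (e j + 1) (by omega)]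
    simp
  apply le_antisymm
  · rw [Ideal.span_le]
    rintro _ ⟨j, rfl⟩
    have hmem : pd (ι j) f ∈ Tj f := by
      apply Ideal.subset_span
      exact Or.inr ⟨ι j, rfl⟩
    have heq : pd (ι j) f = ((e j + 1 : ℕ) : ℂ) • (MvPowerSeries.X (ι j) : MvPowerSeries (Fin n) ℂ) ^ (e j) := by
      rw [hpd]
      rw [Finset.sum_eq_single j]
      · rw [if_pos rfl]
      · intro b _ hb
        rw [if_neg]
        intro h
        exact hb (hι.injective h.symm)
      · simp
    have : (MvPowerSeries.X (ι j) : MvPowerSeries (Fin n) ℂ) ^ (e j)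
        = (((e j + 1 : ℕ) : ℂ))⁻¹ • pd (ι j) f := by
      rw [heq, smul_smul, inv_mul_cancel₀ ((Nat.cast_ne_zero (R := ℂ)).mpr (by omega)), one_smul]
    show MvPowerSeries.X (ι j) ^ e j ∈ Tj f
    rw [this]
    exact Submodule.smul_of_tower_mem _ _ hmem
  · rw [Tj, Ideal.span_le]
    intro g hg
    simp only [Set.mem_union, Set.mem_singleton_iff, Set.mem_range] at hg
    rcases hg with rfl | ⟨k, rfl⟩
    · show f ∈ _
      rw [hf]
      apply Ideal.sum_mem
      intro j _
      have : (MvPowerSeries.X (ι j) : MvPowerSeries (Fin n) ℂ) ^ (e j + 1)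
          = MvPowerSeries.X (ι j) * (MvPowerSeries.X (ι j)) ^ (e j) := by ring
      rw [this]
      exact Ideal.mul_mem_left _ _ (Ideal.subset_span ⟨j, rfl⟩)
    · show pd k f ∈ _
      rw [hpd]
      apply Ideal.sum_mem
      intro j _
      split
      · exact Submodule.smul_of_tower_mem _ _ (Ideal.subset_span (Set.mem_range_self j))
      · exact Ideal.zero_mem _
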